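/- Let s_1, …, s_{K+1} be exchangeable random variables and let α ∈ (0,1) with ⌈(K+1)(1-α)⌉ ≤ K. Then P(s_{K+1} ≤ Q_{1-α}) ≥ 1 - α, where Q_{1-α} is the ⌈(K+1)(1-α)⌉-th order statistic of (s_1, …, s_K), and moreover if the s_k are almost surely distinct then P(s_{K+1} ≤ Q_{1-α}) ≤ 1 - α + 1/(K+1). -/

import Mathlib

open MeasureTheory Finset
open scoped ENNReal NNReal

/-- The `j`-th smallest value among `v 0, …, v (K-1)` (with `j` counted from 1). -/
noncomputable def orderStat {K : ℕ} (v : Fin K → ℝ) (j : ℕ) : ℝ :=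
  (List.insertionSort (· ≤ ·) (List.ofFn v)).getD (j - 1) 0

/-- rank: number of strictly smaller entries -/
noncomputable def rnk {n : ℕ} (v : Fin n → ℝ) (k : Fin n) : ℕ :=
  (univ.filter (fun i => v i < v k)).card

lemma sorted_countP_le_ge (l : List ℝ) (hl : l.Pairwise (· ≤ ·)) (i : ℕ) (hi : i < l.length) :
    i + 1 ≤ l.countP (fun a => a ≤ l[i]) := by
  have h2 : (l.take (i+1)).countP (fun a => a ≤ l[i]) = (l.take (i+1)).length := by
    rw [List.countP_eq_length]
    intro a ha
    rw [List.mem_iff_getElem] at ha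
    obtain ⟨m, hm, rfl⟩ := ha
    rw [List.getElem_take]
    have hmi : m ≤ i := by simp [List.length_take] at hm; omega
    have : l[m] ≤ l[i] := by
      rcases Nat.eq_or_lt_of_le hmi with h | h
      · simp [h]
      · exact List.Pairwise.rel_get_of_lt hl h
    simpa using this
  have h4 : (l.take (i+1)).length = i + 1 := by simp [List.length_take]; omega
  have h1 : l.countP (fun a => a ≤ l[i]) = (l.take (i+1)).countP (fun a => a ≤ l[i]) + (l.drop (i+1)).countP (fun a => a ≤ l[i]) := by
    rw [← List.countP_append, List.take_append_drop]
  omega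

lemma countP_ofFn_eq {n : ℕ} (v : Fin n → ℝ) (p : ℝ → Prop) [DecidablePred p] :
    (List.ofFn v).countP (fun a => p a) = (univ.filter (fun i => p (v i))).card := by
  rw [List.ofFn_eq_map, List.countP_map, Finset.card_filter, Fin.univ_def]
  rw [Finset.sum, List.countP_eq_length_filter]
  change _ = (Multiset.map _ (↑(List.finRange n) : Multiset (Fin n))).sum
  induction (List.finRange n) with
  | nil => simp
  | cons a l ih =>
    simp only [List.filter_cons, Multiset.map_coe, List.map_cons, Multiset.sum_coe, List.sum_cons]
    rw [show ((Multiset.map (fun i => if p (v i) then 1 else 0) ↑l).sum : ℕ) = (List.map (fun i => if p (v i) then 1 else 0) l).sum from rfl] at ih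
    by_cases h : p (v a) <;> simp [h, ih] <;> omega

/-- lower combinatorial bound: at least j indices have rank < j -/
lemma rnk_card_ge {n : ℕ} (v : Fin n → ℝ) (j : ℕ) (hj1 : 1 ≤ j) (hj : j ≤ n) :
    j ≤ (univ.filter (fun k => rnk v k < j)).card := by
  set l := List.insertionSort (· ≤ ·) (List.ofFn v) with hldef
  have hlen : l.length = n := by simp [hldef]
  have hsorted : l.Pairwise (· ≤ ·) := List.pairwise_insertionSort _ _
  have hperm : l.Perm (List.ofFn v) := List.perm_insertionSort _ _
  have hji : j - 1 < l.length := by omega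
  set t := l[j-1] with htdef
  -- count of elements < t is ≤ j - 1
  have hlt : (univ.filter (fun i => v i < t)).card ≤ j - 1 := by
    rw [← countP_ofFn_eq v (fun a => a < t), ← hperm.countP_eq]
    by_contra h
    push_neg at h
    -- element at index j-1 would be < t
    have h1 : l.countP (fun a => a < t) = (l.take (j-1)).countP (fun a => a < t) + (l.drop (j-1)).countP (fun a => a < t) := by
      rw [← List.countP_append, List.take_append_drop]
    have h2 : (l.take (j-1)).countP (fun a => a < t) ≤ j-1 := by
      calc (l.take (j-1)).countP (fun a => a < t) ≤ (l.take (j-1)).length := List.countP_le_length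
        _ ≤ j-1 := by simp [List.length_take]
    have h3 : 0 < (l.drop (j-1)).countP (fun a => a < t) := by omega
    rw [List.countP_pos_iff] at h3
    obtain ⟨a, ha, hat⟩ := h3
    rw [List.mem_iff_getElem] at ha
    obtain ⟨m, hm, rfl⟩ := ha
    have him : j - 1 + m < l.length := by simp [List.length_drop] at hm; omega
    rw [List.getElem_drop] at hat
    have : l[j-1] ≤ l[j - 1 + m] := by
      rcases Nat.eq_or_lt_of_le (Nat.le_add_right (j-1) m) with h | h
      · simp [← h]
      · exact List.Pairwise.rel_get_of_lt hsorted h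
    simp at hat
    rw [← htdef] at this
    linarith
  -- at least j indices with v k ≤ t
  have hle : j ≤ (univ.filter (fun k => v k ≤ t)).card := by
    rw [← countP_ofFn_eq v (fun a => a ≤ t), ← hperm.countP_eq]
    have := sorted_countP_le_ge l hsorted (j-1) hji
    rw [← htdef] at this
    omega
  refine le_trans hle (Finset.card_le_card ?_)
  intro k hk
  simp only [Finset.mem_filter, Finset.mem_univ, true_and] at hk ⊢
  unfold rnk
  calc (univ.filter (fun i => v i < v k)).card
      ≤ (univ.filter (fun i => v i < t)).card := by
        apply Finset.card_le_card
        intro i hi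
        simp only [Finset.mem_filter, Finset.mem_univ, true_and] at hi ⊢
        linarith
    _ ≤ j - 1 := hlt
    _ < j := by omega

/-- rank is strictly monotone in the value -/
lemma rnk_lt_rnk {n : ℕ} (v : Fin n → ℝ) {k k' : Fin n} (h : v k < v k') :
    rnk v k < rnk v k' := by
  apply Finset.card_lt_card
  constructor
  · intro i hi
    simp only [Finset.mem_filter, Finset.mem_univ, true_and] at hi ⊢
    linarith
  · intro hsub
    have := hsub (Finset.mem_filter.2 ⟨Finset.mem_univ k, h⟩)
    simp at this

/-- upper combinatorial bound under injectivity -/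
lemma rnk_card_le {n : ℕ} (v : Fin n → ℝ) (hv : Function.Injective v) (j : ℕ) :
    (univ.filter (fun k => rnk v k < j)).card ≤ j := by
  have hinj : Set.InjOn (rnk v) (univ.filter (fun k => rnk v k < j)) := by
    intro a _ b _ hab
    by_contra hne
    rcases lt_trichotomy (v a) (v b) with h | h | h
    · exact absurd hab (Nat.ne_of_lt (rnk_lt_rnk v h))
    · exact hne (hv h)
    · exact absurd hab.symm (Nat.ne_of_lt (rnk_lt_rnk v h))
  calc (univ.filter (fun k => rnk v k < j)).card
      ≤ (Finset.range j).card := by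
        apply Finset.card_le_card_of_injOn (rnk v) ?_ hinj
        intro k hk
        simp only [Finset.mem_coe, Finset.mem_filter] at hk
        simpa using hk.2
    _ = j := Finset.card_range j

lemma sorted_le_getD_iff (l : List ℝ) (hl : l.Pairwise (· ≤ ·)) (t : ℝ) (i : ℕ) (hi : i < l.length) :
    t ≤ l.getD i 0 ↔ l.countP (fun a => a < t) ≤ i := by
  rw [List.getD_eq_getElem l 0 hi]
  constructor
  · intro ht
    by_contra h
    push_neg at h
    have h1 : l.countP (fun a => a < t) = (l.take i).countP (fun a => a < t) + (l.drop i).countP (fun a => a < t) := by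
      rw [← List.countP_append, List.take_append_drop]
    have h2 : (l.take i).countP (fun a => a < t) ≤ i := by
      calc (l.take i).countP (fun a => a < t) ≤ (l.take i).length := List.countP_le_length
        _ ≤ i := by simp [List.length_take]
    have h3 : 0 < (l.drop i).countP (fun a => a < t) := by omega
    rw [List.countP_pos_iff] at h3
    obtain ⟨a, ha, hat⟩ := h3
    rw [List.mem_iff_getElem] at ha
    obtain ⟨m, hm, rfl⟩ := ha
    have him : i + m < l.length := by simp [List.length_drop] at hm; omega
    rw [List.getElem_drop] at hat
    have : l[i] ≤ l[i + m] := by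
      rcases Nat.eq_or_lt_of_le (Nat.le_add_right i m) with h | h
      · simp [← h]
      · exact List.Pairwise.rel_get_of_lt hl h
    simp at hat
    linarith
  · intro hc
    by_contra ht
    push_neg at ht
    have h2 : (l.take (i+1)).countP (fun a => a < t) = (l.take (i+1)).length := by
      rw [List.countP_eq_length]
      intro a ha
      rw [List.mem_iff_getElem] at ha
      obtain ⟨m, hm, rfl⟩ := ha
      rw [List.getElem_take]
      have hmi : m ≤ i := by simp [List.length_take] at hm; omega
      have : l[m] ≤ l[i] := by
        rcases Nat.eq_or_lt_of_le hmi with h | h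
        · simp [h]
        · exact List.Pairwise.rel_get_of_lt hl h
      simp
      linarith
    have h4 : (l.take (i+1)).length = i + 1 := by simp [List.length_take]; omega
    have h1 : l.countP (fun a => a < t) = (l.take (i+1)).countP (fun a => a < t) + (l.drop (i+1)).countP (fun a => a < t) := by
      rw [← List.countP_append, List.take_append_drop]
    omega

lemma le_orderStat_iff {K : ℕ} (v : Fin K → ℝ) (t : ℝ) (j : ℕ) (hj1 : 1 ≤ j) (hjK : j ≤ K) :
    t ≤ orderStat v j ↔ (univ.filter (fun i => v i < t)).card < j := by
  unfold orderStat
  set l := List.insertionSort (· ≤ ·) (List.ofFn v) with hldef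
  have hlen : l.length = K := by simp [hldef]
  have hsorted : l.Pairwise (· ≤ ·) := List.pairwise_insertionSort _ _
  have hperm : l.Perm (List.ofFn v) := List.perm_insertionSort _ _
  have hcount : l.countP (fun a => a < t) = (univ.filter (fun i => v i < t)).card := by
    rw [hperm.countP_eq, countP_ofFn_eq v (fun a => a < t)]
  rw [sorted_le_getD_iff l hsorted t (j-1) (by omega), hcount]
  omega

lemma card_filter_castSucc {K : ℕ} (p : Fin (K+1) → Prop) [DecidablePred p]
    (hlast : ¬ p (Fin.last K)) :
    (univ.filter p).card = (univ.filter (fun i : Fin K => p i.castSucc)).card := by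
  rw [Fin.univ_castSuccEmb, Finset.filter_cons, if_neg hlast, Finset.filter_map, Finset.card_map]
  rfl

/-- rank of last coordinate coincides with the count among the first K when
the last value is compared as `t`. -/
lemma rnk_last_eq {K : ℕ} (w : Fin (K+1) → ℝ) :
    rnk w (Fin.last K)
      = (univ.filter (fun i : Fin K => w i.castSucc < w (Fin.last K))).card := by
  unfold rnk
  exact card_filter_castSucc (fun i => w i < w (Fin.last K)) (by simp)

/-- rank composed with a permutation -/
lemma rnk_comp_perm {n : ℕ} (v : Fin n → ℝ) (π : Equiv.Perm (Fin n)) (k : Fin n) :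
    rnk (v ∘ π) k = rnk v (π k) := by
  unfold rnk
  apply Finset.card_bij (fun i _ => π i)
  · intro i hi
    simp only [Finset.mem_filter, Finset.mem_univ, true_and, Function.comp_apply] at hi ⊢
    exact hi
  · intro a _ b _ hab
    exact π.injective hab
  · intro b hb
    refine ⟨π.symm b, ?_, by simp⟩
    simp only [Finset.mem_filter, Finset.mem_univ, true_and, Function.comp_apply] at hb ⊢
    simpa using hb

lemma measurable_rnk_comp {Ω : Type*} [MeasurableSpace Ω] {n : ℕ}
    (s : Fin n → Ω → ℝ) (hs : ∀ k, Measurable (s k)) (k0 : Fin n) :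
    Measurable (fun ω => rnk (fun k => s k ω) k0) := by
  have h : (fun ω => rnk (fun k => s k ω) k0)
      = fun ω => ∑ i : Fin n, if s i ω < s k0 ω then 1 else 0 := by
    funext ω
    unfold rnk
    rw [Finset.card_filter]
  rw [h]
  exact Finset.measurable_sum _ fun i _ =>
    Measurable.ite (measurableSet_lt (hs i) (hs k0)) measurable_const measurable_const

lemma measurable_rnk_pi {n : ℕ} (k0 : Fin n) :
    Measurable (fun v : Fin n → ℝ => rnk v k0) :=
  measurable_rnk_comp (fun k (v : Fin n → ℝ) => v k) (fun k => measurable_pi_apply k) k0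

lemma measurableSet_C {n : ℕ} (k0 : Fin n) (j : ℕ) :
    MeasurableSet {v : Fin n → ℝ | rnk v k0 < j} := by
  have : {v : Fin n → ℝ | rnk v k0 < j} = (fun v => rnk v k0) ⁻¹' {m | m < j} := rfl
  rw [this]
  exact measurable_rnk_pi k0 (by trivial)

open MeasureTheory
open scoped ENNReal NNReal

/-- Two-sided split conformal coverage: for exchangeable scores `s 0, …, s K` with
`⌈(K+1)(1-α)⌉ ≤ K`, letting `Q` be the `⌈(K+1)(1-α)⌉`-th order statistic of the first
`K` scores, one has `P(s K ≤ Q) ≥ 1 - α`, and if moreover the scores are almost surely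
distinct then `P(s K ≤ Q) ≤ 1 - α + 1/(K+1)`. -/
theorem split_conformal_two_sided
    {Ω : Type*} [MeasurableSpace Ω] (μ : Measure Ω) [IsProbabilityMeasure μ]
    (K : ℕ) (s : Fin (K + 1) → Ω → ℝ) (hs : ∀ k, Measurable (s k))
    (hexch : ∀ π : Equiv.Perm (Fin (K + 1)),
      Measure.map (fun ω => fun k => s (π k) ω) μ
        = Measure.map (fun ω => fun k => s k ω) μ)
    (α : ℝ) (hα : α ∈ Set.Ioo (0 : ℝ) 1)
    (hK : ⌈((K : ℝ) + 1) * (1 - α)⌉ ≤ (K : ℤ)) :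
    ENNReal.ofReal (1 - α) ≤
        μ {ω | s (Fin.last K) ω ≤
          orderStat (fun k : Fin K => s k.castSucc ω) ⌈((K : ℝ) + 1) * (1 - α)⌉.toNat} ∧
      (μ {ω | ∃ i j : Fin (K + 1), i ≠ j ∧ s i ω = s j ω} = 0 →
        μ {ω | s (Fin.last K) ω ≤
            orderStat (fun k : Fin K => s k.castSucc ω) ⌈((K : ℝ) + 1) * (1 - α)⌉.toNat}
          ≤ ENNReal.ofReal (1 - α + 1 / ((K : ℝ) + 1))) := by
  classical
  obtain ⟨hα0, hα1⟩ := hα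
  set x : ℝ := ((K : ℝ) + 1) * (1 - α) with hxdef
  have hxpos : 0 < x := by
    apply mul_pos
    · positivity
    · linarith
  set j : ℕ := ⌈x⌉.toNat with hjdef
  have hceil_pos : (1 : ℤ) ≤ ⌈x⌉ := Int.ceil_pos.2 hxpos
  have hj1 : 1 ≤ j := by omega
  have hjK : j ≤ K := by omega
  have hjcastR : (j : ℝ) = (⌈x⌉ : ℝ) := by
    rw [hjdef]
    norm_cast
    omega
  have hxlej : x ≤ (j : ℝ) := by rw [hjcastR]; exact Int.le_ceil x
  have hjltx : (j : ℝ) < x + 1 := by rw [hjcastR]; exact Int.ceil_lt_add_one x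
  -- the random vector
  set S : Ω → (Fin (K + 1) → ℝ) := fun ω => fun k => s k ω with hSdef
  have hS : Measurable S := measurable_pi_lambda _ hs
  set C : Fin (K + 1) → Set (Fin (K + 1) → ℝ) := fun k => {v | rnk v k < j} with hCdef
  have hC : ∀ k, MeasurableSet (C k) := fun k => measurableSet_C k j
  set B : Fin (K + 1) → Set Ω := fun k => S ⁻¹' (C k) with hBdef
  have hB : ∀ k, MeasurableSet (B k) := fun k => hS (hC k)
  -- event identification
  have hevent : {ω | s (Fin.last K) ω ≤
      orderStat (fun k : Fin K => s k.castSucc ω) j} = B (Fin.last K) := by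
    ext ω
    simp only [Set.mem_setOf_eq, hBdef, Set.mem_preimage, hCdef, Set.mem_setOf_eq]
    rw [le_orderStat_iff _ _ j hj1 hjK]
    rw [show rnk (S ω) (Fin.last K)
        = (Finset.univ.filter (fun i : Fin K => S ω i.castSucc < S ω (Fin.last K))).card
      from rnk_last_eq (S ω)]
  -- exchangeability: all B k have equal measure
  have hkey : ∀ k : Fin (K + 1), μ (B k) = μ (B (Fin.last K)) := by
    intro k
    set π : Equiv.Perm (Fin (K + 1)) := Equiv.swap (Fin.last K) k with hπdef
    have hπm : Measurable (fun v : Fin (K + 1) → ℝ => v ∘ π) :=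
      measurable_pi_lambda _ (fun k' => measurable_pi_apply _)
    have hcomp : (fun ω => fun k' => s (π k') ω) = (fun v : Fin (K+1) → ℝ => v ∘ π) ∘ S := rfl
    have hmap : Measure.map (fun v : Fin (K+1) → ℝ => v ∘ π) (Measure.map S μ)
        = Measure.map S μ := by
      rw [Measure.map_map hπm hS, ← hcomp]
      exact hexch π
    have hCk : C k = (fun v : Fin (K+1) → ℝ => v ∘ π) ⁻¹' (C (Fin.last K)) := by
      ext v
      simp only [hCdef, Set.mem_setOf_eq, Set.mem_preimage]
      rw [rnk_comp_perm v π (Fin.last K), hπdef, Equiv.swap_apply_left]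
    calc μ (B k) = Measure.map S μ (C k) := (Measure.map_apply hS (hC k)).symm
      _ = Measure.map S μ ((fun v : Fin (K+1) → ℝ => v ∘ π) ⁻¹' (C (Fin.last K))) := by
          rw [← hCk]
      _ = Measure.map (fun v : Fin (K+1) → ℝ => v ∘ π) (Measure.map S μ) (C (Fin.last K)) := by
          rw [Measure.map_apply hπm (hC (Fin.last K))]
      _ = Measure.map S μ (C (Fin.last K)) := by rw [hmap]
      _ = μ (B (Fin.last K)) := Measure.map_apply hS (hC (Fin.last K))
  set m : ℝ≥0∞ := μ (B (Fin.last K)) with hmdef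
  -- sum of measures = (K+1) * m
  have hsum : ∑ k : Fin (K + 1), μ (B k) = ((K : ℝ≥0∞) + 1) * m := by
    rw [Finset.sum_congr rfl (fun k _ => hkey k), Finset.sum_const]
    simp [nsmul_eq_mul]
  -- sum of measures as integral
  have hint : ∑ k : Fin (K + 1), μ (B k)
      = ∫⁻ ω, ∑ k : Fin (K + 1), (B k).indicator (fun _ => (1 : ℝ≥0∞)) ω ∂μ := by
    rw [lintegral_finset_sum _ (fun k _ => measurable_const.indicator (hB k))]
    exact Finset.sum_congr rfl fun k _ => (lintegral_indicator_one (hB k)).symm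
  -- pointwise: sum of indicators = card of ranks below j
  have hpt : ∀ ω, ∑ k : Fin (K + 1), (B k).indicator (fun _ => (1 : ℝ≥0∞)) ω
      = ((Finset.univ.filter (fun k : Fin (K+1) => rnk (S ω) k < j)).card : ℝ≥0∞) := by
    intro ω
    rw [← Finset.sum_boole]
    apply Finset.sum_congr rfl
    intro k _
    rw [Set.indicator_apply]
    congr 1
  -- lower bound on integral
  have hlow : ((j : ℝ≥0∞)) ≤ ((K : ℝ≥0∞) + 1) * m := by
    rw [← hsum, hint]
    calc (j : ℝ≥0∞) = ∫⁻ _, (j : ℝ≥0∞) ∂μ := by simp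
      _ ≤ _ := by
        apply lintegral_mono
        intro ω
        dsimp only
        rw [hpt ω]
        exact_mod_cast Nat.cast_le.2 (rnk_card_ge (S ω) j hj1 (by omega))
  have hK1ne0 : ((K : ℝ≥0∞) + 1) ≠ 0 := by simp
  have hK1netop : ((K : ℝ≥0∞) + 1) ≠ ⊤ := by simp
  have hK1ofReal : ((K : ℝ≥0∞) + 1) = ENNReal.ofReal ((K : ℝ) + 1) := by
    rw [ENNReal.ofReal_add (by positivity) (by norm_num)]
    simp [ENNReal.ofReal_natCast]
  constructor
  · -- lower bound
    rw [hevent, ← hmdef]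
    rw [← ENNReal.mul_le_mul_iff_right hK1ne0 hK1netop]
    calc ((K : ℝ≥0∞) + 1) * ENNReal.ofReal (1 - α)
        = ENNReal.ofReal (((K : ℝ) + 1) * (1 - α)) := by
          rw [hK1ofReal, ← ENNReal.ofReal_mul (by positivity)]
      _ ≤ ENNReal.ofReal (j : ℝ) := ENNReal.ofReal_le_ofReal hxlej
      _ = (j : ℝ≥0∞) := ENNReal.ofReal_natCast j
      _ ≤ ((K : ℝ≥0∞) + 1) * m := hlow
  · -- upper bound
    intro hties
    rw [hevent, ← hmdef]
    -- a.e. upper bound on the sum of indicators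
    have hhigh : ((K : ℝ≥0∞) + 1) * m ≤ (j : ℝ≥0∞) := by
      rw [← hsum, hint]
      have hae : ∀ᵐ ω ∂μ, ∑ k : Fin (K + 1), (B k).indicator (fun _ => (1 : ℝ≥0∞)) ω
          ≤ (j : ℝ≥0∞) := by
        rw [ae_iff]
        apply measure_mono_null _ hties
        intro ω hω
        simp only [Set.mem_setOf_eq, not_le] at hω
        by_contra hnot
        simp only [Set.mem_setOf_eq, not_exists] at hnot
        have hinj : Function.Injective (S ω) := by
          intro a b hab
          by_contra hne
          exact (hnot a b) ⟨hne, hab⟩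
        have := rnk_card_le (S ω) hinj j
        rw [hpt ω] at hω
        exact absurd hω (by exact_mod_cast not_lt.2 (Nat.cast_le.2 this))
      calc ∫⁻ ω, ∑ k : Fin (K + 1), (B k).indicator (fun _ => (1 : ℝ≥0∞)) ω ∂μ
          ≤ ∫⁻ _, (j : ℝ≥0∞) ∂μ := lintegral_mono_ae hae
        _ = (j : ℝ≥0∞) := by simp
    rw [← ENNReal.mul_le_mul_iff_right hK1ne0 hK1netop]
    have harith : (j : ℝ) ≤ ((K : ℝ) + 1) * (1 - α + 1 / ((K : ℝ) + 1)) := by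
      have hK1pos : (0 : ℝ) < (K : ℝ) + 1 := by positivity
      rw [mul_add, mul_one_div, div_self (ne_of_gt hK1pos)]
      linarith
    calc ((K : ℝ≥0∞) + 1) * m ≤ (j : ℝ≥0∞) := hhigh
      _ = ENNReal.ofReal (j : ℝ) := (ENNReal.ofReal_natCast j).symm
      _ ≤ ENNReal.ofReal (((K : ℝ) + 1) * (1 - α + 1 / ((K : ℝ) + 1))) :=
          ENNReal.ofReal_le_ofReal harith
      _ = ((K : ℝ≥0∞) + 1) * ENNReal.ofReal (1 - α + 1 / ((K : ℝ) + 1)) := by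
          rw [hK1ofReal, ← ENNReal.ofReal_mul (by positivity)]
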